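/- Suppose α ≥ 2 and 0 < ε < 1/5. Then every feasible path σ for the promenade problem contains a point σ(s) whose first coordinate equals α/2 + 1 and whose second coordinate y satisfies either y < 1 or y > α + 1; that is, every feasible path crosses the vertical line x = α/2 + 1 either below or above the obstacle. -/

import Mathlib

/-- A point of the plane `ℝ²` (as a Euclidean space) with given coordinates. -/
noncomputable def pt (x y : ℝ) : EuclideanSpace ℝ (Fin 2) := WithLp.toLp 2 ![x, y]

/-- In the promenade problem (configuration space `X = [0,α+2]²`, obstacle
`X_obs = [1,α+1]²`, `X_free = X \ X_obs`, `X_init = (1−ε, 1+2ε)`,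
`X_goal = (α+1+ε, 1+2ε)`, with `α ≥ 2`, `0 < ε < 1/5`), every feasible path
(continuous, of bounded variation, from `X_init` to `X_goal`, staying in `X_free`)
contains a point whose first coordinate is `α/2 + 1` and whose second coordinate is
either `< 1` or `> α + 1`: it crosses the vertical line `x = α/2 + 1`
below or above the obstacle. -/
theorem promenade_crosses_midline (α ε : ℝ) (hα : 2 ≤ α) (hε0 : 0 < ε) (hε1 : ε < 1/5)
    (σ : ℝ → EuclideanSpace ℝ (Fin 2))
    (hcont : ContinuousOn σ (Set.Icc 0 1))
    (hbv : BoundedVariationOn σ (Set.Icc 0 1))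
    (hinit : σ 0 = pt (1 - ε) (1 + 2*ε))
    (hgoal : σ 1 = pt (α + 1 + ε) (1 + 2*ε))
    (hfree : ∀ s ∈ Set.Icc (0:ℝ) 1,
      (σ s 0 ∈ Set.Icc (0:ℝ) (α+2) ∧ σ s 1 ∈ Set.Icc (0:ℝ) (α+2)) ∧
      ¬(σ s 0 ∈ Set.Icc (1:ℝ) (α+1) ∧ σ s 1 ∈ Set.Icc (1:ℝ) (α+1))) :
    ∃ s ∈ Set.Icc (0:ℝ) 1, σ s 0 = α/2 + 1 ∧ (σ s 1 < 1 ∨ α + 1 < σ s 1) := by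
  have hf : ContinuousOn (fun s => σ s 0) (Set.Icc 0 1) :=
    (EuclideanSpace.proj (0 : Fin 2) : EuclideanSpace ℝ (Fin 2) →L[ℝ] ℝ).continuous.comp_continuousOn hcont
  have h0 : σ 0 0 = 1 - ε := by simp [hinit, pt]
  have h1 : σ 1 0 = α + 1 + ε := by simp [hgoal, pt]
  have hmem : (α/2 + 1) ∈ Set.Icc (σ 0 0) (σ 1 0) := by
    rw [h0, h1]; constructor <;> nlinarith
  obtain ⟨s, hs, hsx⟩ := intermediate_value_Icc (by norm_num) hf hmem
  refine ⟨s, hs, hsx, ?_⟩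
  have := (hfree s hs).2
  by_contra h
  push_neg at h
  exact this ⟨by rw [show σ s 0 = α/2 + 1 from hsx]; constructor <;> nlinarith, h.1, h.2⟩
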